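/- Suppose S=(s_i) is an aperiodic orientable sequence of order n of length ℓ. Then D^{-1}(S) consists of an o-disjoint pair of primitive complementary aperiodic orientable sequences of order n+1, each of length ℓ+1. -/

import Mathlib

/-- The `n`-tuple of the finite sequence `L` at position `i` (as a list). -/
def ltup (L : List Bool) (n i : ℕ) : List Bool := (L.drop i).take n

/-- An aperiodic orientable sequence of order `n`: the `n`-tuples at positions
`0 ≤ i ≤ length - n`, together with their reverses, are pairwise distinct. -/
def isAOS (L : List Bool) (n : ℕ) : Prop :=
  n ≤ L.length ∧ ∀ i j, i ≤ L.length - n → j ≤ L.length - n →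
    (ltup L n i = ltup L n j → i = j) ∧ ltup L n i ≠ (ltup L n j).reverse

/-- The complement of a finite sequence. -/
def complL (L : List Bool) : List Bool := L.map (fun b => !b)

/-- The Lempel homomorphism `D` on finite sequences. -/
def DmapL (L : List Bool) : List Bool := L.zipWith xor L.tail

/-- The set `D⁻¹(S)` of finite sequences of length `|S| + 1` mapping to `S`. -/
def DinvL (S : List Bool) : Set (List Bool) :=
  { T | T.length = S.length + 1 ∧ DmapL T = S }

/-- Two finite sequences are disjoint if they share no `n`-tuple. -/
def disjL (A B : List Bool) (n : ℕ) : Prop :=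
  ∀ i j, i ≤ A.length - n → j ≤ B.length - n → ltup A n i ≠ ltup B n j

/-- Two finite sequences are o-disjoint: disjoint, and neither contains the
reverse of an `n`-tuple of the other. -/
def oDisjL (A B : List Bool) (n : ℕ) : Prop :=
  disjL A B n ∧ ∀ i j, i ≤ A.length - n → j ≤ B.length - n →
    ltup A n i ≠ (ltup B n j).reverse

/-- A finite sequence is primitive if it is disjoint from its complement. -/
def primitiveL (A : List Bool) (n : ℕ) : Prop := disjL A (complL A) n

/-- An ideal `AOS(n)`: its first `n-1` bits are `0` and its last `n-1` bits are `1`. -/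
def idealA (L : List Bool) (n : ℕ) : Prop :=
  isAOS L n ∧ (∀ i, i < n - 1 → L.getD i false = false) ∧
    (∀ i, i < n - 1 → L.getD (L.length - 1 - i) false = true)

/-- Theorem 8: if `S` is an aperiodic orientable sequence of order `n` of length
`ℓ`, then `D⁻¹(S)` consists of an o-disjoint pair of primitive complementary
aperiodic orientable sequences of order `n+1`, each of length `ℓ + 1`. -/
lemma getElem_congr_idxL {L : List Bool} {i j : ℕ} (h : i = j) (hi : i < L.length) :
    L[i] = L[j]'(h ▸ hi) := by subst h; rfl

lemma DmapL_length (L : List Bool) : (DmapL L).length = L.length - 1 := by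
  simp [DmapL]

lemma DmapL_getElem (L : List Bool) (k : ℕ) (h : k < (DmapL L).length) :
    (DmapL L)[k] = xor (L[k]'(by simp [DmapL_length] at h; omega))
      (L[k+1]'(by simp [DmapL_length] at h; omega)) := by
  simp only [DmapL, List.getElem_zipWith, List.getElem_tail]

lemma ltup_length (L : List Bool) (n i : ℕ) :
    (ltup L n i).length = min n (L.length - i) := by
  simp [ltup]

lemma ltup_getElem (L : List Bool) (n i k : ℕ) (h : k < (ltup L n i).length) :
    (ltup L n i)[k] = L[i+k]'(by simp [ltup_length] at h; omega) := by
  simp only [ltup, List.getElem_take, List.getElem_drop]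

lemma complL_length (L : List Bool) : (complL L).length = L.length := by simp [complL]

lemma complL_getElem (L : List Bool) (k : ℕ) (h : k < (complL L).length) :
    (complL L)[k] = !(L[k]'(by simpa [complL_length] using h)) := by
  simp [complL]

lemma DmapL_complL (L : List Bool) : DmapL (complL L) = DmapL L := by
  apply List.ext_getElem
  · simp [DmapL_length, complL_length]
  · intro k h1 h2
    rw [DmapL_getElem, DmapL_getElem, complL_getElem, complL_getElem]
    cases L[k]'(by simp [DmapL_length] at h2; omega) <;>
      cases L[k+1]'(by simp [DmapL_length] at h2; omega) <;> rfl

lemma DmapL_reverse (L : List Bool) : DmapL L.reverse = (DmapL L).reverse := by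
  apply List.ext_getElem
  · simp [DmapL_length]
  · intro k h1 h2
    have hk : k < L.length - 1 := by simpa [DmapL_length] using h1
    rw [DmapL_getElem, List.getElem_reverse, List.getElem_reverse, List.getElem_reverse,
      DmapL_getElem]
    simp only [DmapL_length]
    rw [Bool.xor_comm,
      getElem_congr_idxL (show L.length - 1 - (k+1) = L.length - 1 - 1 - k by omega),
      getElem_congr_idxL (show L.length - 1 - k = L.length - 1 - 1 - k + 1 by omega)]

lemma complL_ltup (L : List Bool) (n i : ℕ) :
    ltup (complL L) n i = complL (ltup L n i) := by
  simp [ltup, complL, List.map_take, List.map_drop]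

lemma complL_reverse (L : List Bool) : complL L.reverse = (complL L).reverse := by
  simp [complL]

lemma complL_complL (L : List Bool) : complL (complL L) = L := by
  simp [complL, List.map_map, Function.comp_def]

lemma DmapL_ltup (T : List Bool) (n i : ℕ) (h : i + (n+1) ≤ T.length) :
    DmapL (ltup T (n+1) i) = ltup (DmapL T) n i := by
  apply List.ext_getElem
  · simp [DmapL_length, ltup_length]; omega
  · intro k h1 h2
    have hk : k < n := by simp [DmapL_length, ltup_length] at h1; omega
    rw [DmapL_getElem, ltup_getElem, ltup_getElem, ltup_getElem, DmapL_getElem]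
    rw [getElem_congr_idxL (show i + (k+1) = i + k + 1 by omega)]

def integ : Bool → List Bool → List Bool
  | b, [] => [b]
  | b, s :: S => b :: integ (xor b s) S

lemma integ_cons (b s : Bool) (S : List Bool) :
    integ b (s :: S) = b :: integ (xor b s) S := rfl

lemma exists_integ (S : List Bool) (b : Bool) : ∃ r, integ b S = b :: r := by
  cases S <;> exact ⟨_, rfl⟩

lemma integ_length (S : List Bool) : ∀ b, (integ b S).length = S.length + 1 := by
  induction S with
  | nil => intro b; rfl
  | cons s S ih => intro b; simp [integ_cons, ih]

lemma DmapL_cons_cons (a b : Bool) (t : List Bool) :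
    DmapL (a :: b :: t) = (xor a b) :: DmapL (b :: t) := by
  simp [DmapL]

lemma DmapL_integ (S : List Bool) : ∀ b, DmapL (integ b S) = S := by
  induction S with
  | nil => intro b; rfl
  | cons s S ih =>
    intro b
    obtain ⟨r, hr⟩ := exists_integ S (xor b s)
    rw [integ_cons, hr, DmapL_cons_cons, ← hr, ih]
    congr 1
    cases b <;> cases s <;> rfl

lemma complL_integ (S : List Bool) : ∀ b, complL (integ b S) = integ (!b) S := by
  induction S with
  | nil => intro b; rfl
  | cons s S ih =>
    intro b
    rw [integ_cons, integ_cons]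
    show ((!b) :: complL (integ (xor b s) S)) = ((!b) :: integ (xor (!b) s) S)
    rw [ih]
    congr 1
    cases b <;> cases s <;> rfl

lemma eq_integ : ∀ (S U : List Bool), U.length = S.length + 1 → DmapL U = S →
    U = integ (U.headD false) S := by
  intro S
  induction S with
  | nil =>
    intro U hl _
    match U, hl with
    | [u], _ => rfl
  | cons s S ih =>
    intro U hl hD
    match U, hl with
    | u :: v :: t, hl =>
      rw [DmapL_cons_cons] at hD
      obtain ⟨h1, h2⟩ := List.cons.injEq _ _ _ _ ▸ hD
      have hvt : v :: t = integ v S := by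
        have := ih (v :: t) (by simpa using hl) h2
        simp at this
        exact this
      rw [integ_cons]
      show u :: v :: t = u :: integ (xor u s) S
      rw [hvt]
      congr 2
      rw [← h1]
      cases u <;> cases v <;> rfl

lemma Dmap_inj (U V : List Bool) (hl : U.length = V.length) (hD : DmapL U = DmapL V) :
    U = V ∨ U = complL V := by
  cases U with
  | nil =>
    cases V with
    | nil => exact Or.inl rfl
    | cons v t => simp at hl
  | cons u tu =>
    cases V with
    | nil => simp at hl
    | cons v tv =>
      have h1 : (u :: tu) = integ u (DmapL (u :: tu)) := by
        have := eq_integ (DmapL (u :: tu)) (u :: tu) (by simp [DmapL_length]) rfl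
        simp at this
        exact this
      have h2 : (v :: tv) = integ v (DmapL (v :: tv)) := by
        have := eq_integ (DmapL (v :: tv)) (v :: tv) (by simp [DmapL_length]) rfl
        simp at this
        exact this
      rw [hD] at h1
      cases u <;> cases v
      · exact Or.inl (h1.trans h2.symm)
      · exact Or.inr (h1.trans ((congrArg complL h2).trans (complL_integ _ true)).symm)
      · exact Or.inr (h1.trans ((congrArg complL h2).trans (complL_integ _ false)).symm)
      · exact Or.inl (h1.trans h2.symm)

lemma compl_tuple_ne (T : List Bool) (n i : ℕ) (h : i + (n+1) ≤ T.length) :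
    ltup T (n+1) i ≠ complL (ltup T (n+1) i) := by
  have hlen : (ltup T (n+1) i).length = n + 1 := by
    rw [ltup_length]; omega
  intro hEq
  cases hl : ltup T (n+1) i with
  | nil => rw [hl] at hlen; simp at hlen
  | cons a t =>
    rw [hl] at hEq
    have : a = !a := by
      have := congrArg (fun l => l.headD false) hEq
      simp [complL] at this
    simp at this

lemma aos_transfer (n : ℕ) (S T : List Bool) (hS : isAOS S n)
    (hT : T.length = S.length + 1) (hD : DmapL T = S) : isAOS T (n+1) := by
  obtain ⟨hn, hS2⟩ := hS
  refine ⟨by omega, ?_⟩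
  intro i j hi hj
  have hi' : i + (n+1) ≤ T.length := by omega
  have hj' : j + (n+1) ≤ T.length := by omega
  have hDi : DmapL (ltup T (n+1) i) = ltup S n i := by rw [DmapL_ltup T n i hi', hD]
  have hDj : DmapL (ltup T (n+1) j) = ltup S n j := by rw [DmapL_ltup T n j hj', hD]
  have hbi : i ≤ S.length - n := by omega
  have hbj : j ≤ S.length - n := by omega
  constructor
  · intro hEq
    exact (hS2 i j hbi hbj).1 (by rw [← hDi, ← hDj, hEq])
  · intro hEq
    apply (hS2 i j hbi hbj).2
    rw [← hDi, ← hDj, hEq, DmapL_reverse]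

theorem lempel_aperiodic (n ℓ : ℕ) (S : List Bool)
    (hlen : S.length = ℓ) (h : isAOS S n) :
    ∃ T T' : List Bool, T ≠ T' ∧ DinvL S = {T, T'} ∧ T' = complL T ∧
      T.length = ℓ + 1 ∧ T'.length = ℓ + 1 ∧
      isAOS T (n + 1) ∧ isAOS T' (n + 1) ∧ oDisjL T T' (n + 1) ∧
      primitiveL T (n + 1) ∧ primitiveL T' (n + 1) := by
  subst hlen
  set T : List Bool := integ false S with hTdef
  have hn : n ≤ S.length := h.1
  have hTlen : T.length = S.length + 1 := integ_length S false
  have hTD : DmapL T = S := DmapL_integ S false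
  have hTc : complL T = integ true S := by
    rw [hTdef, complL_integ]; rfl
  have hTclen : (complL T).length = S.length + 1 := by
    rw [complL_length, hTlen]
  have hTcD : DmapL (complL T) = S := by rw [DmapL_complL, hTD]
  -- the key disjointness fact
  have key : ∀ i j, i ≤ T.length - (n+1) → j ≤ T.length - (n+1) →
      ltup T (n+1) i ≠ complL (ltup T (n+1) j) := by
    intro i j hi hj hEq
    have hi' : i + (n+1) ≤ T.length := by omega
    have hj' : j + (n+1) ≤ T.length := by omega
    have hD2 : ltup S n i = ltup S n j := by
      rw [← hTD, ← DmapL_ltup T n i hi', ← DmapL_ltup T n j hj', hEq, DmapL_complL]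
    have hij : i = j := (h.2 i j (by omega) (by omega)).1 hD2
    subst hij
    exact compl_tuple_ne T n i hi' hEq
  have keyR : ∀ i j, i ≤ T.length - (n+1) → j ≤ T.length - (n+1) →
      ltup T (n+1) i ≠ (complL (ltup T (n+1) j)).reverse := by
    intro i j hi hj hEq
    have hi' : i + (n+1) ≤ T.length := by omega
    have hj' : j + (n+1) ≤ T.length := by omega
    apply (h.2 i j (by omega) (by omega)).2
    rw [← hTD, ← DmapL_ltup T n i hi', ← DmapL_ltup T n j hj', hEq, ← complL_reverse,
      DmapL_complL, DmapL_reverse]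
  refine ⟨T, complL T, ?_, ?_, rfl, hTlen, hTclen, ?_, ?_, ?_, ?_, ?_⟩
  · -- T ≠ complL T
    obtain ⟨r, hr⟩ := exists_integ S false
    rw [hTdef, hr]
    intro hc
    simpa [complL] using congrArg (fun l => l.headD false) hc
  · -- DinvL S = {T, complL T}
    ext U
    simp only [DinvL, Set.mem_setOf_eq, Set.mem_insert_iff, Set.mem_singleton_iff]
    constructor
    · rintro ⟨h1, h2⟩
      rcases Dmap_inj U T (by rw [h1, hTlen]) (by rw [h2, hTD]) with hU | hU
      · exact Or.inl hU
      · exact Or.inr hU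
    · rintro (rfl | rfl)
      · exact ⟨hTlen, hTD⟩
      · exact ⟨hTclen, hTcD⟩
  · exact aos_transfer n S T h hTlen hTD
  · exact aos_transfer n S (complL T) h hTclen hTcD
  · -- oDisjL
    constructor
    · intro i j hi hj hEq
      rw [complL_length] at hj
      rw [complL_ltup] at hEq
      exact key i j hi hj hEq
    · intro i j hi hj hEq
      rw [complL_length] at hj
      rw [complL_ltup] at hEq
      exact keyR i j hi hj hEq
  · -- primitiveL T
    intro i j hi hj hEq
    rw [complL_length] at hj
    rw [complL_ltup] at hEq
    exact key i j hi hj hEq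
  · -- primitiveL (complL T)
    intro i j hi hj hEq
    rw [complL_length] at hi
    rw [complL_length, complL_length] at hj
    rw [complL_complL] at hEq
    rw [complL_ltup] at hEq
    exact key j i hj hi hEq.symm
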